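/- Let A be the (n+1)-dimensional n-ary algebra of type (C_1) over a field F with δ ≠ 1. Let w = (δ/(1-δ))·Σ_{k=1}^{n-1} β_{kk}. Then the linear map φ defined by φ(e_i) = Σ_{j=1}^{n+1} β_{ij} e_j for i < n, φ(e_n) = w·e_n + β_{n,n+1}·e_{n+1}, φ(e_{n+1}) = (δ/α)·β_{n,n+1}·e_n + w·e_{n+1}, where β_{n,n+1} = 0 unless δ = -1, is a δ-derivation of A. -/

import Mathlib

-- value of succAbove
lemma C1aux_val_succAbove {n : ℕ} (m : Fin (n + 1)) (i : Fin n) :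
    ((m.succAbove i : Fin (n + 1)) : ℕ) = if (i : ℕ) < (m : ℕ) then (i : ℕ) else (i : ℕ) + 1 := by
  unfold Fin.succAbove
  split_ifs with h1 h2 h2 <;> simp_all [Fin.lt_def]

lemma C1aux_val_succAbove_lt {n : ℕ} (m : Fin (n + 1)) (i : Fin n) (h : (i : ℕ) < (m : ℕ)) :
    ((m.succAbove i : Fin (n + 1)) : ℕ) = (i : ℕ) := by
  rw [C1aux_val_succAbove, if_pos h]

lemma C1aux_val_succAbove_ge {n : ℕ} (m : Fin (n + 1)) (i : Fin n) (h : (m : ℕ) ≤ (i : ℕ)) :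
    ((m.succAbove i : Fin (n + 1)) : ℕ) = (i : ℕ) + 1 := by
  rw [C1aux_val_succAbove, if_neg (by omega)]

-- decomposition of injective map
lemma C1aux_decomp {n : ℕ} {v : Fin n → Fin (n + 1)} (hv : Function.Injective v) :
    ∃ (m : Fin (n + 1)) (σ : Equiv.Perm (Fin n)), v = m.succAbove ∘ σ := by
  have hne : (Finset.univ.image v)ᶜ.Nonempty := by
    rw [← Finset.card_pos, Finset.card_compl]
    have h1 := Finset.card_image_le (f := v) (s := Finset.univ)
    simp only [Finset.card_univ, Fintype.card_fin] at h1 ⊢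
    omega
  obtain ⟨m, hm⟩ := hne
  have hm' : ∀ i, v i ≠ m := by
    intro i h
    rw [Finset.mem_compl] at hm
    exact hm (Finset.mem_image.mpr ⟨i, Finset.mem_univ i, h⟩)
  choose σ' hσ' using fun i => Fin.exists_succAbove_eq (hm' i)
  have hinj : Function.Injective σ' := fun a c hac => hv (by rw [← hσ' a, ← hσ' c, hac])
  refine ⟨m, Equiv.ofBijective σ' (Finite.injective_iff_bijective.mp hinj), ?_⟩
  funext i
  simp only [Function.comp_apply, Equiv.ofBijective_apply, hσ' i]

-- permutation invariance of the derivation identity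
lemma C1aux_perm {F A : Type*} [Field F] [AddCommGroup A] [Module F A] {n : ℕ}
    (br : AlternatingMap F A A (Fin n)) (δ : F) (φ : A →ₗ[F] A)
    (x : Fin n → A) (σ : Equiv.Perm (Fin n))
    (h : φ (br x) = δ • ∑ i, br (Function.update x i (φ (x i)))) :
    φ (br (x ∘ σ)) = δ • ∑ i, br (Function.update (x ∘ σ) i (φ ((x ∘ σ) i))) := by
  have key : ∀ i, Function.update (x ∘ σ) i (φ ((x ∘ σ) i)) =
      (Function.update x (σ i) (φ (x (σ i)))) ∘ σ := by
    intro i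
    rw [Function.update_comp_equiv]
    simp
  calc φ (br (x ∘ σ)) = φ ((Equiv.Perm.sign σ : ℤˣ) • br x) := by rw [br.map_perm]
    _ = (Equiv.Perm.sign σ : ℤˣ) • φ (br x) := by
        rw [Units.smul_def, Units.smul_def, map_zsmul]
    _ = (Equiv.Perm.sign σ : ℤˣ) • (δ • ∑ i, br (Function.update x i (φ (x i)))) := by rw [h]
    _ = δ • ∑ i, br (Function.update (x ∘ σ) i (φ ((x ∘ σ) i))) := by
        rw [smul_comm]
        congr 1
        calc (Equiv.Perm.sign σ : ℤˣ) • ∑ i, br (Function.update x i (φ (x i)))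
            = (Equiv.Perm.sign σ : ℤˣ) • ∑ i, br (Function.update x (σ i) (φ (x (σ i)))) := by
              rw [Equiv.sum_comp σ (fun j => br (Function.update x j (φ (x j))))]
          _ = ∑ i, (Equiv.Perm.sign σ : ℤˣ) • br (Function.update x (σ i) (φ (x (σ i)))) :=
              Finset.smul_sum
          _ = ∑ i, br (Function.update (x ∘ σ) i (φ ((x ∘ σ) i))) := by
              refine Finset.sum_congr rfl fun i _ => ?_
              rw [key i, br.map_perm]

-- br vanishes on basis tuples missing a "small" index
lemma C1aux_zero {F A : Type*} [Field F] [AddCommGroup A] [Module F A] {n : ℕ}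
    (b : Module.Basis (Fin (n + 1)) F A) (α : F)
    (br : AlternatingMap F A A (Fin n))
    (hbr : ∀ i : Fin (n + 1),
      br (b ∘ i.succAbove) =
        if (i : ℕ) = n - 1 then b i
        else if (i : ℕ) = n then α • b i
        else 0)
    (v : Fin n → Fin (n + 1)) (m : Fin (n + 1))
    (hm : ∀ i, v i ≠ m) (h1 : (m : ℕ) ≠ n - 1) (h2 : (m : ℕ) ≠ n) :
    br (b ∘ v) = 0 := by
  by_cases hv : Function.Injective v
  · obtain ⟨m', σ, rfl⟩ := C1aux_decomp hv
    have hmm : m' = m := by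
      by_contra hne
      obtain ⟨j, hj⟩ := Fin.exists_succAbove_eq (Ne.symm hne)
      exact hm (σ.symm j) (by simp [Function.comp_apply, hj])
    rw [show b ∘ (Fin.succAbove m' ∘ σ) = (b ∘ Fin.succAbove m') ∘ σ from rfl, br.map_perm, hmm, hbr m, if_neg h1, if_neg h2, smul_zero]
  · refine br.map_eq_zero_of_not_injective _ fun h => hv ?_
    intro a c hac
    exact h (show (b ∘ v) a = (b ∘ v) c from congrArg b hac)

-- the key per-slot evaluation when the slot entry has small index
lemma C1aux_Tsmall {F A : Type*} [Field F] [AddCommGroup A] [Module F A] {n : ℕ}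
    (hn : 2 ≤ n) (b : Module.Basis (Fin (n + 1)) F A) (α : F)
    (br : AlternatingMap F A A (Fin n))
    (hbr : ∀ i : Fin (n + 1),
      br (b ∘ i.succAbove) =
        if (i : ℕ) = n - 1 then b i
        else if (i : ℕ) = n then α • b i
        else 0)
    (δ : F) (β : Fin (n + 1) → Fin (n + 1) → F) (γ : F) (w : F)
    (φ : A →ₗ[F] A)
    (hφ : φ = b.constr F (fun i : Fin (n + 1) =>
      if (i : ℕ) < n - 1 then ∑ j, β i j • b j
      else if (i : ℕ) = n - 1 then w • b i + γ • b (Fin.last n)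
      else (δ / α * γ) • b ⟨n - 1, Nat.lt_succ_of_le (Nat.sub_le n 1)⟩ + w • b i))
    (m : Fin (n + 1)) (i : Fin n)
    (hk : ((Fin.succAbove m i : Fin (n + 1)) : ℕ) < n - 1) :
    br (Function.update (b ∘ Fin.succAbove m) i (φ (b (Fin.succAbove m i)))) =
      β (Fin.succAbove m i) (Fin.succAbove m i) • br (b ∘ Fin.succAbove m) := by
  classical
  set f := Fin.succAbove m with hf
  set k := f i with hkdef
  have hφk : φ (b k) = ∑ j, β k j • b j := by
    rw [hφ, Module.Basis.constr_basis, if_pos hk]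
  rw [hφk, br.map_update_sum]
  have hterm : ∀ j : Fin (n + 1), j ≠ k →
      br (Function.update (b ∘ f) i (β k j • b j)) = 0 := by
    intro j hj
    rw [br.map_update_smul]
    rw [show Function.update (b ∘ f) i (b j) = b ∘ Function.update f i j from
      (Function.comp_update b f i j).symm]
    by_cases hjm : j = m
    · have hz : br (b ∘ Function.update f i j) = 0 := by
        apply C1aux_zero b α br hbr _ k
        · intro a
          by_cases ha : a = i
          · rw [ha, Function.update_self, hjm]
            exact Fin.ne_succAbove m i
          · rw [Function.update_of_ne ha]
            exact fun h => ha (Fin.succAbove_right_injective h)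
        · omega
        · omega
      rw [hz, smul_zero]
    · obtain ⟨a, ha⟩ := Fin.exists_succAbove_eq hjm
      have hai : a ≠ i := fun h => hj (by rw [← ha, h])
      have : br (b ∘ Function.update f i j) = 0 := by
        apply br.map_eq_zero_of_eq _ (i := i) (j := a) _ hai.symm
        rw [Function.comp_apply, Function.comp_apply, Function.update_self,
          Function.update_of_ne hai]
        exact congrArg b ha.symm
      rw [this, smul_zero]
  rw [Finset.sum_eq_single k (fun j _ hj => hterm j hj) (fun h => absurd (Finset.mem_univ k) h)]
  rw [br.map_update_smul]
  congr 1
  rw [show Function.update (b ∘ f) i (b k) = b ∘ Function.update f i k from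
    (Function.comp_update b f i k).symm, hkdef, Function.update_eq_self]

lemma C1aux_base {F A : Type*} [Field F] [AddCommGroup A] [Module F A] {n : ℕ} (hn : 2 ≤ n)
    (b : Module.Basis (Fin (n + 1)) F A)
    (α : F) (hα : α ≠ 0)
    (br : AlternatingMap F A A (Fin n))
    (hbr : ∀ i : Fin (n + 1),
      br (b ∘ i.succAbove) =
        if (i : ℕ) = n - 1 then b i
        else if (i : ℕ) = n then α • b i
        else 0)
    (δ : F) (hδ1 : δ ≠ 1)
    (β : Fin (n + 1) → Fin (n + 1) → F) (γ : F)
    (hγ : δ ≠ -1 → γ = 0)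
    (w : F)
    (hw : w = δ / (1 - δ) *
      ∑ k ∈ Finset.univ.filter (fun k : Fin (n + 1) => (k : ℕ) < n - 1), β k k)
    (φ : A →ₗ[F] A)
    (hφ : φ = b.constr F (fun i : Fin (n + 1) =>
      if (i : ℕ) < n - 1 then ∑ j, β i j • b j
      else if (i : ℕ) = n - 1 then w • b i + γ • b (Fin.last n)
      else (δ / α * γ) • b ⟨n - 1, Nat.lt_succ_of_le (Nat.sub_le n 1)⟩ + w • b i))
    (m : Fin (n + 1)) :
    φ (br (b ∘ Fin.succAbove m)) =
      δ • ∑ i, br (Function.update (b ∘ Fin.succAbove m) i (φ ((b ∘ Fin.succAbove m) i))) := by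
  classical
  -- scalar facts
  have h1δ : (1 : F) - δ ≠ 0 := sub_ne_zero.mpr (Ne.symm hδ1)
  set S : F := ∑ k ∈ Finset.univ.filter (fun k : Fin (n + 1) => (k : ℕ) < n - 1), β k k with hS0
  have hwS : w * (1 - δ) = δ * S := by rw [hw]; field_simp
  have hS : δ * S + δ * w = w := by linear_combination -hwS
  have hγ2 : δ * (δ / α * γ * α) = γ := by
    rcases eq_or_ne δ (-1) with h | h
    · subst h; field_simp
    · rw [hγ h]; ring
  -- duplicate-slot vanishing
  have hdup : ∀ (i : Fin n) (j : Fin (n + 1)), j ≠ Fin.succAbove m i → j ≠ m →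
      br (Function.update (b ∘ Fin.succAbove m) i (b j)) = 0 := by
    intro i j hj hjm
    obtain ⟨a, ha⟩ := Fin.exists_succAbove_eq hjm
    have hai : a ≠ i := fun h => hj (by rw [← ha, h])
    rw [show Function.update (b ∘ Fin.succAbove m) i (b j)
        = b ∘ Function.update (Fin.succAbove m) i j from (Function.comp_update b _ i j).symm]
    apply br.map_eq_zero_of_eq _ (i := i) (j := a) _ hai.symm
    rw [Function.comp_apply, Function.comp_apply, Function.update_self,
      Function.update_of_ne hai]
    exact congrArg b ha.symm
  have hself : ∀ i : Fin n,
      Function.update (b ∘ Fin.succAbove m) i (b (Fin.succAbove m i)) = b ∘ Fin.succAbove m := by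
    intro i
    rw [show Function.update (b ∘ Fin.succAbove m) i (b (Fin.succAbove m i))
        = b ∘ Function.update (Fin.succAbove m) i (Fin.succAbove m i) from
        (Function.comp_update b _ i _).symm, Function.update_eq_self]
  have hmn : (m : ℕ) ≤ n := Nat.lt_succ_iff.mp m.isLt
  -- case split on m
  by_cases hm1 : (m : ℕ) < n - 1
  · -- small m : both sides vanish
    have hbrm : br (b ∘ Fin.succAbove m) = 0 := by
      rw [hbr m, if_neg (by omega), if_neg (by omega)]
    rw [hbrm, map_zero]
    rw [Finset.sum_eq_zero, smul_zero]
    intro i _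
    have hv := C1aux_val_succAbove m i
    rw [show (b ∘ Fin.succAbove m) i = b (Fin.succAbove m i) from rfl]
    by_cases hk1 : ((Fin.succAbove m i : Fin (n + 1)) : ℕ) < n - 1
    · rw [C1aux_Tsmall hn b α br hbr δ β γ w φ hφ m i hk1, hbrm, smul_zero]
    · by_cases hk2 : ((Fin.succAbove m i : Fin (n + 1)) : ℕ) = n - 1
      · rw [hφ, Module.Basis.constr_basis, if_neg (by omega), if_pos hk2, br.map_update_add,
          br.map_update_smul, br.map_update_smul, hself i, hbrm, smul_zero,
          hdup i (Fin.last n) (by simp only [Ne, Fin.ext_iff, Fin.val_last]; omega)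
            (by simp only [Ne, Fin.ext_iff, Fin.val_last]; omega), smul_zero, add_zero]
      · have hk3 : ((Fin.succAbove m i : Fin (n + 1)) : ℕ) = n := by
          have := (Fin.succAbove m i).isLt; omega
        rw [hφ, Module.Basis.constr_basis, if_neg (by omega), if_neg (by omega), br.map_update_add,
          br.map_update_smul, br.map_update_smul, hself i, hbrm, smul_zero, add_zero,
          hdup i ⟨n - 1, by omega⟩ (by simp only [Ne, Fin.ext_iff]; omega)
            (by simp only [Ne, Fin.ext_iff]; omega), smul_zero]
  · -- now (m:ℕ) = n-1 or n; shared sum reindexing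
    have hsum : ∑ i ∈ Finset.univ.filter (fun i : Fin n => (i : ℕ) < n - 1),
        β (Fin.succAbove m i) (Fin.succAbove m i) = S := by
      rw [hS0]
      refine Finset.sum_bij' (fun i _ => Fin.succAbove m i)
        (fun k hk => ⟨(k : ℕ), by have := (Finset.mem_filter.mp hk).2; omega⟩)
        ?_ ?_ ?_ ?_ ?_
      · intro a ha
        have h1 := (Finset.mem_filter.mp ha).2
        have h2 := C1aux_val_succAbove_lt m a (by omega)
        simp only [Finset.mem_filter, Finset.mem_univ, true_and]
        omega
      · intro k hk
        have h1 := (Finset.mem_filter.mp hk).2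
        simp only [Finset.mem_filter, Finset.mem_univ, true_and]
        exact h1
      · intro a ha
        have h1 := (Finset.mem_filter.mp ha).2
        have h2 := C1aux_val_succAbove_lt m a (by omega)
        apply Fin.ext
        simp only
        omega
      · intro k hk
        have h1 := (Finset.mem_filter.mp hk).2
        apply Fin.ext
        rw [C1aux_val_succAbove_lt m _ (by simp only; omega)]
      · intro a _
        rfl
    by_cases hm2 : (m : ℕ) = n - 1
    · -- m = e_n case
      have hbrm : br (b ∘ Fin.succAbove m) = b m := by rw [hbr m, if_pos hm2]
      have hφm : φ (b m) = w • b m + γ • b (Fin.last n) := by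
        rw [hφ, Module.Basis.constr_basis, if_neg (by omega), if_pos hm2]
      rw [hbrm, hφm]
      have hT : ∀ i : Fin n,
          br (Function.update (b ∘ Fin.succAbove m) i (φ ((b ∘ Fin.succAbove m) i))) =
          if (i : ℕ) < n - 1 then β (Fin.succAbove m i) (Fin.succAbove m i) • b m
          else (δ / α * γ) • (α • b (Fin.last n)) + w • b m := by
        intro i
        rw [show (b ∘ Fin.succAbove m) i = b (Fin.succAbove m i) from rfl]
        by_cases hi : (i : ℕ) < n - 1
        · rw [if_pos hi]
          have hk : ((Fin.succAbove m i : Fin (n + 1)) : ℕ) < n - 1 := by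
            rw [C1aux_val_succAbove_lt m i (by omega)]; exact hi
          rw [C1aux_Tsmall hn b α br hbr δ β γ w φ hφ m i hk, hbrm]
        · rw [if_neg hi]
          have hii : (i : ℕ) = n - 1 := by have := i.isLt; omega
          have hki : ((Fin.succAbove m i : Fin (n + 1)) : ℕ) = n := by
            rw [C1aux_val_succAbove_ge m i (by omega)]; omega
          rw [hφ, Module.Basis.constr_basis, if_neg (by omega), if_neg (by omega),
            br.map_update_add, br.map_update_smul, br.map_update_smul, hself i, hbrm]
          congr 2
          have hMi : (⟨n - 1, by omega⟩ : Fin (n + 1)) = m := Fin.ext (by simp [hm2])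
          rw [hMi, show Function.update (b ∘ Fin.succAbove m) i (b m)
              = b ∘ Function.update (Fin.succAbove m) i m from (Function.comp_update b _ i m).symm]
          have hu : Function.update (Fin.succAbove m) i m = Fin.succAbove (Fin.last n) := by
            funext a
            by_cases ha : a = i
            · rw [ha, Function.update_self]
              apply Fin.ext
              rw [C1aux_val_succAbove_lt (Fin.last n) i (by rw [Fin.val_last]; have := i.isLt; omega)]
              omega
            · rw [Function.update_of_ne ha]
              apply Fin.ext
              have h3 : (a : ℕ) ≠ n - 1 := fun h => ha (Fin.ext (by omega))
              have h4 := a.isLt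
              rw [C1aux_val_succAbove_lt m a (by omega),
                C1aux_val_succAbove_lt (Fin.last n) a (by rw [Fin.val_last]; omega)]
          rw [hu, hbr (Fin.last n), if_neg (by rw [Fin.val_last]; omega),
            if_pos (by rw [Fin.val_last])]
      have hsplit : (∑ i, br (Function.update (b ∘ Fin.succAbove m) i (φ ((b ∘ Fin.succAbove m) i)))) = S • b m + ((δ / α * γ) • (α • b (Fin.last n)) + w • b m) := calc
        (∑ i, br (Function.update (b ∘ Fin.succAbove m) i (φ ((b ∘ Fin.succAbove m) i)))) =
          ∑ i : Fin n, (if (i : ℕ) < n - 1 then β (Fin.succAbove m i) (Fin.succAbove m i) • b m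
            else (δ / α * γ) • (α • b (Fin.last n)) + w • b m) :=
            Finset.sum_congr rfl fun i _ => hT i
        _ = (∑ i ∈ Finset.univ.filter (fun i : Fin n => (i : ℕ) < n - 1),
              β (Fin.succAbove m i) (Fin.succAbove m i) • b m) +
            ∑ i ∈ Finset.univ.filter (fun i : Fin n => ¬ (i : ℕ) < n - 1),
              ((δ / α * γ) • (α • b (Fin.last n)) + w • b m) := Finset.sum_ite _ _
        _ = S • b m + ((δ / α * γ) • (α • b (Fin.last n)) + w • b m) := by
            rw [← Finset.sum_smul, hsum]
            congr 1
            rw [show Finset.univ.filter (fun i : Fin n => ¬ (i : ℕ) < n - 1)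
                = {(⟨n - 1, by omega⟩ : Fin n)} from by
              ext a
              simp only [Finset.mem_filter, Finset.mem_univ, true_and, Finset.mem_singleton,
                Fin.ext_iff]
              have := a.isLt
              omega]
            rw [Finset.sum_singleton]
      rw [hsplit]
      have hS' : w = δ * S + δ * w := hS.symm
      have hγ2' : γ = δ * (δ / α * γ * α) := hγ2.symm
      linear_combination (norm := module) hS' • b m + hγ2' • b (Fin.last n)
    · -- m = last, (m:ℕ) = n
      have hm3 : (m : ℕ) = n := by omega
      have hbrm : br (b ∘ Fin.succAbove m) = α • b m := by
        rw [hbr m, if_neg (by omega), if_pos hm3]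
      have hφm : φ (b m) = (δ / α * γ) • b ⟨n - 1, by omega⟩ + w • b m := by
        rw [hφ, Module.Basis.constr_basis, if_neg (by omega), if_neg (by omega)]
      rw [hbrm, map_smul, hφm]
      have hT : ∀ i : Fin n,
          br (Function.update (b ∘ Fin.succAbove m) i (φ ((b ∘ Fin.succAbove m) i))) =
          if (i : ℕ) < n - 1 then β (Fin.succAbove m i) (Fin.succAbove m i) • (α • b m)
          else w • (α • b m) + γ • b ⟨n - 1, by omega⟩ := by
        intro i
        rw [show (b ∘ Fin.succAbove m) i = b (Fin.succAbove m i) from rfl]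
        by_cases hi : (i : ℕ) < n - 1
        · rw [if_pos hi]
          have hk : ((Fin.succAbove m i : Fin (n + 1)) : ℕ) < n - 1 := by
            rw [C1aux_val_succAbove_lt m i (by omega)]; exact hi
          rw [C1aux_Tsmall hn b α br hbr δ β γ w φ hφ m i hk, hbrm]
        · rw [if_neg hi]
          have hii : (i : ℕ) = n - 1 := by have := i.isLt; omega
          have hki : ((Fin.succAbove m i : Fin (n + 1)) : ℕ) = n - 1 := by
            rw [C1aux_val_succAbove_lt m i (by omega)]; omega
          have hφk : φ (b (Fin.succAbove m i)) =
              w • b (Fin.succAbove m i) + γ • b (Fin.last n) := by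
            rw [hφ, Module.Basis.constr_basis, if_neg (by omega), if_pos hki]
          rw [hφk, br.map_update_add, br.map_update_smul, br.map_update_smul, hself i, hbrm]
          congr 1
          congr 1
          rw [show Function.update (b ∘ Fin.succAbove m) i (b (Fin.last n))
              = b ∘ Function.update (Fin.succAbove m) i (Fin.last n) from
              (Function.comp_update b _ i _).symm]
          have hu : Function.update (Fin.succAbove m) i (Fin.last n)
              = Fin.succAbove ⟨n - 1, by omega⟩ := by
            funext a
            by_cases ha : a = i
            · rw [ha, Function.update_self]
              apply Fin.ext
              rw [C1aux_val_succAbove_ge ⟨n - 1, by omega⟩ i (by simp only; omega), Fin.val_last]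
              omega
            · rw [Function.update_of_ne ha]
              apply Fin.ext
              have h3 : (a : ℕ) ≠ n - 1 := fun h => ha (Fin.ext (by omega))
              have h4 := a.isLt
              rw [C1aux_val_succAbove_lt m a (by omega),
                C1aux_val_succAbove_lt ⟨n - 1, by omega⟩ a (by simp only; omega)]
          rw [hu, hbr ⟨n - 1, by omega⟩, if_pos rfl]
      have hsplit : (∑ i, br (Function.update (b ∘ Fin.succAbove m) i
            (φ ((b ∘ Fin.succAbove m) i)))) =
          S • (α • b m) + (w • (α • b m) + γ • b ⟨n - 1, by omega⟩) := calc
        (∑ i, br (Function.update (b ∘ Fin.succAbove m) i (φ ((b ∘ Fin.succAbove m) i)))) =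
          ∑ i : Fin n, (if (i : ℕ) < n - 1
              then β (Fin.succAbove m i) (Fin.succAbove m i) • (α • b m)
              else w • (α • b m) + γ • b ⟨n - 1, by omega⟩) :=
            Finset.sum_congr rfl fun i _ => hT i
        _ = (∑ i ∈ Finset.univ.filter (fun i : Fin n => (i : ℕ) < n - 1),
              β (Fin.succAbove m i) (Fin.succAbove m i) • (α • b m)) +
            ∑ i ∈ Finset.univ.filter (fun i : Fin n => ¬ (i : ℕ) < n - 1),
              (w • (α • b m) + γ • b ⟨n - 1, by omega⟩) := Finset.sum_ite _ _
        _ = S • (α • b m) + (w • (α • b m) + γ • b ⟨n - 1, by omega⟩) := by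
            rw [← Finset.sum_smul, hsum]
            congr 1
            rw [show Finset.univ.filter (fun i : Fin n => ¬ (i : ℕ) < n - 1)
                = {(⟨n - 1, by omega⟩ : Fin n)} from by
              ext a
              simp only [Finset.mem_filter, Finset.mem_univ, true_and, Finset.mem_singleton,
                Fin.ext_iff]
              have := a.isLt
              omega]
            rw [Finset.sum_singleton]
      rw [hsplit]
      have hSα : α * w = δ * (S * α) + δ * (w * α) := by linear_combination α * hS.symm
      have hαγ : α * (δ / α * γ) = δ * γ := by field_simp
      linear_combination (norm := module) hSα • b m +
        hαγ • b (⟨n - 1, by omega⟩ : Fin (n + 1))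

/-- Type `(C_1)`: with `w = (δ/(1-δ))·Σ_{k=1}^{n-1} β_{kk}`, the map
`φ(e_i) = Σ_j β_{ij} e_j` (`i < n`), `φ(e_n) = w e_n + γ e_{n+1}`,
`φ(e_{n+1}) = (δ/α) γ e_n + w e_{n+1}` (with `γ = 0` unless `δ = -1`)
is a `δ`-derivation. -/
theorem C1_map_is_delta_derivation
    {F A : Type*} [Field F] [AddCommGroup A] [Module F A] {n : ℕ} (hn : 2 ≤ n)
    (b : Module.Basis (Fin (n + 1)) F A)
    (α : F) (hα : α ≠ 0)
    (br : AlternatingMap F A A (Fin n))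
    (hbr : ∀ i : Fin (n + 1),
      br (b ∘ i.succAbove) =
        if (i : ℕ) = n - 1 then b i
        else if (i : ℕ) = n then α • b i
        else 0)
    (δ : F) (hδ1 : δ ≠ 1)
    (β : Fin (n + 1) → Fin (n + 1) → F) (γ : F)
    (hγ : δ ≠ -1 → γ = 0)
    (w : F)
    (hw : w = δ / (1 - δ) *
      ∑ k ∈ Finset.univ.filter (fun k : Fin (n + 1) => (k : ℕ) < n - 1), β k k)
    (φ : A →ₗ[F] A)
    (hφ : φ = b.constr F (fun i : Fin (n + 1) =>
      if (i : ℕ) < n - 1 then ∑ j, β i j • b j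
      else if (i : ℕ) = n - 1 then w • b i + γ • b (Fin.last n)
      else (δ / α * γ) • b ⟨n - 1, by omega⟩ + w • b i)) :
    ∀ x : Fin n → A,
      φ (br x) = δ • ∑ i, br (Function.update x i (φ (x i))) := by
  classical
  have key : ∀ v : Fin n → Fin (n + 1),
      φ (br (b ∘ v)) = δ • ∑ i, br (Function.update (b ∘ v) i (φ ((b ∘ v) i))) := by
    intro v
    by_cases hv : Function.Injective v
    · obtain ⟨m, σ, rfl⟩ := C1aux_decomp hv
      have hbase := C1aux_base hn b α hα br hbr δ hδ1 β γ hγ w hw φ hφ m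
      have := C1aux_perm br δ φ (b ∘ Fin.succAbove m) σ hbase
      exact this
    · have h0 : br (b ∘ v) = 0 :=
        br.map_eq_zero_of_not_injective _ (fun h => hv fun a c hac => h (congrArg b hac))
      rw [h0, map_zero]
      obtain ⟨i, j, hvij, hij⟩ : ∃ i j, v i = v j ∧ i ≠ j := by
        simpa [Function.Injective, not_forall] using hv
      have hterm0 : ∀ k, k ≠ i → k ≠ j →
          br (Function.update (b ∘ v) k (φ ((b ∘ v) k))) = 0 := by
        intro k hki hkj
        apply br.map_eq_zero_of_eq _ (i := i) (j := j) _ hij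
        rw [Function.update_of_ne (Ne.symm hki), Function.update_of_ne (Ne.symm hkj)]
        exact congrArg b hvij
      have hpair : br (Function.update (b ∘ v) j (φ ((b ∘ v) j))) =
          - br (Function.update (b ∘ v) i (φ ((b ∘ v) i))) := by
        have hcomp : Function.update (b ∘ v) j (φ ((b ∘ v) j)) =
            (Function.update (b ∘ v) i (φ ((b ∘ v) i))) ∘ Equiv.swap i j := by
          funext a
          show Function.update (b ∘ v) j (φ ((b ∘ v) j)) a =
            Function.update (b ∘ v) i (φ ((b ∘ v) i)) (Equiv.swap i j a)
          rcases eq_or_ne a i with rfl | hai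
          · rw [Equiv.swap_apply_left, Function.update_of_ne hij, Function.update_of_ne hij.symm]
            exact congrArg b hvij
          · rcases eq_or_ne a j with rfl | haj
            · rw [Equiv.swap_apply_right, Function.update_self, Function.update_self]
              exact congrArg φ (congrArg b hvij.symm)
            · rw [Equiv.swap_apply_of_ne_of_ne hai haj, Function.update_of_ne haj,
                Function.update_of_ne hai]
        rw [hcomp, br.map_swap _ hij]
      have hsub : (∑ k, br (Function.update (b ∘ v) k (φ ((b ∘ v) k)))) =
          ∑ k ∈ ({i, j} : Finset (Fin n)), br (Function.update (b ∘ v) k (φ ((b ∘ v) k))) :=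
        (Finset.sum_subset (Finset.subset_univ _)
          (fun k _ hk => hterm0 k (fun h => hk (by simp [h])) (fun h => hk (by simp [h])))).symm
      rw [hsub, Finset.sum_pair hij, hpair, add_neg_cancel, smul_zero]
  -- extend by multilinearity
  set L : MultilinearMap F (fun _ : Fin n => A) A :=
    φ.compMultilinearMap br.toMultilinearMap with hL
  set R : MultilinearMap F (fun _ : Fin n => A) A :=
    δ • ∑ i : Fin n, br.toMultilinearMap.compLinearMap
      (Function.update (fun _ => (LinearMap.id : A →ₗ[F] A)) i φ) with hR
  have hRapp : ∀ y : Fin n → A, R y = δ • ∑ i, br (Function.update y i (φ (y i))) := by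
    intro y
    rw [hR, MultilinearMap.smul_apply, MultilinearMap.sum_apply]
    congr 1
    refine Finset.sum_congr rfl fun i _ => ?_
    rw [MultilinearMap.compLinearMap_apply]
    show br _ = br _
    congr 1
    funext a
    rcases eq_or_ne a i with rfl | ha
    · simp
    · simp [ha]
  have hLR : L = R := by
    apply Module.Basis.ext_multilinear (fun _ => b)
    intro v
    have h1 : (fun i => b (v i)) = b ∘ v := rfl
    rw [h1]
    show φ (br (b ∘ v)) = R (b ∘ v)
    rw [hRapp, key v]
  intro x
  calc φ (br x) = L x := rfl
    _ = R x := DFunLike.congr_fun hLR x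
    _ = δ • ∑ i, br (Function.update x i (φ (x i))) := hRapp x
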